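/- Let R' ⊆ (ℕ → Bool) and define R = { y : ℕ → Bool | ∃ j ≥ 0, (∀ i < j·n, y i = w (i mod n)) ∧ (fun i => y (j·n + i)) ∈ R' } for a fixed word w : Fin n → Bool (i.e., R = w* R'). If no d-element set can be weakly shattered by R' (where weak shattering allows discarding arbitrary finite prefixes of each sequence), then no (d + ⌈log₂ n⌉ + 2)-element set can be weakly shattered by R. -/

import Mathlib

/-- `S` weakly shatters `d` points: there are tails of elements of `S`
realizing all `2^d` Boolean patterns at some coordinates. -/
def WeaklyShatters (S : Set (ℕ → Bool)) (d : ℕ) : Prop :=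
  ∃ y : Fin d → (ℕ → Bool),
    (∀ i, ∃ z ∈ S, ∃ s : ℕ, ∀ n, y i n = z (s + n)) ∧
    ∀ σ : Fin d → Bool, ∃ j : ℕ, ∀ i, y i j = σ i

theorem stmt_14 (n : ℕ) (hn : 0 < n) (w : Fin n → Bool)
    (R' : Set (ℕ → Bool)) (d : ℕ)
    (R : Set (ℕ → Bool))
    (hR : R = { y | ∃ j : ℕ,
      (∀ i < j * n, y i = w ⟨i % n, Nat.mod_lt i hn⟩) ∧
      (fun i => y (j * n + i)) ∈ R' })
    (hR' : ¬ WeaklyShatters R' d) :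
    ¬ WeaklyShatters R (d + Nat.clog 2 n + 2) := by
  intro hsh
  set m := Nat.clog 2 n with hm
  obtain ⟨y, hy, hpat⟩ := hsh
  -- extract, for each coordinate, the switch time `t`, the phase `a`,
  -- the `R'` element `z` and the tail offset `e`
  have hdata : ∀ i : Fin (d + m + 2), ∃ t : ℕ, ∃ a : ℕ, ∃ z ∈ R',
      (∀ l < t, y i l = w ⟨(a + l) % n, Nat.mod_lt _ hn⟩) ∧
      (∃ e : ℕ, ∀ k, y i (t + k) = z (e + k)) := by
    intro i
    obtain ⟨x, hx, s, hs⟩ := hy i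
    rw [hR] at hx
    obtain ⟨j, hpre, hz⟩ := hx
    refine ⟨j * n - s, s, _, hz, ?_, ?_⟩
    · intro l hl
      have h1 : s + l < j * n := by omega
      rw [hs l, hpre _ h1]
    · refine ⟨s + (j * n - s) - j * n, fun k => ?_⟩
      rw [hs]
      show x (s + (j * n - s + k)) = x (j * n + (s + (j * n - s) - j * n + k))
      congr 1
      omega
  choose t a z hz hper e htail using hdata
  have hdD : d ≤ d + m + 2 := by omega
  set π := Tuple.sort t with hπ
  have hmono : Monotone (t ∘ π) := Tuple.monotone_sort t
  set T := Finset.univ.sup (fun i : Fin d => t (π (Fin.castLE hdD i))) with hT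
  have hTle : ∀ i : Fin d, t (π (Fin.castLE hdD i)) ≤ T := by
    intro i
    rw [hT]
    exact Finset.le_sup (f := fun i : Fin d => t (π (Fin.castLE hdD i))) (Finset.mem_univ i)
  have hTge : ∀ i : Fin (d + m + 2), d ≤ (i : ℕ) → T ≤ t (π i) := by
    intro i hi
    rw [hT]
    apply Finset.sup_le
    intro b _
    have hb := b.isLt
    have hle : Fin.castLE hdD b ≤ i := by
      rw [Fin.le_def]
      simp only [Fin.coe_castLE]
      omega
    exact hmono hle
  -- the first d (in sorted order) coordinates, shifted by T, are tails of R' elements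
  have htails : ∀ i : Fin d, ∃ z' ∈ R', ∃ s : ℕ,
      ∀ l, y (π (Fin.castLE hdD i)) (T + l) = z' (s + l) := by
    intro i
    refine ⟨z (π (Fin.castLE hdD i)), hz _,
      e (π (Fin.castLE hdD i)) + (T - t (π (Fin.castLE hdD i))), fun l => ?_⟩
    have hl := hTle i
    have h1 : T + l = t (π (Fin.castLE hdD i)) + ((T - t (π (Fin.castLE hdD i))) + l) := by
      omega
    rw [h1, htail]
    congr 1
    omega
  -- since R' does not weakly shatter d points, some pattern τ is never realized
  -- at positions ≥ T
  have hτex : ∃ τ : Fin d → Bool, ∀ j, ∃ i, y (π (Fin.castLE hdD i)) (T + j) ≠ τ i := by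
    by_contra hcon
    push_neg at hcon
    exact hR' ⟨fun i l => y (π (Fin.castLE hdD i)) (T + l), htails, hcon⟩
  obtain ⟨τ, hτ⟩ := hτex
  -- every pattern on the remaining m+2 coordinates, extended by τ, is realized
  -- at a position below all their switch times, hence determined by the phases
  have key : ∀ σ : Fin (m + 2) → Bool, ∃ j : ℕ, ∀ k : Fin (m + 2),
      σ k = w ⟨(a (π ⟨d + (k : ℕ), Nat.add_lt_add_left k.isLt d⟩) + j) % n,
        Nat.mod_lt _ hn⟩ := by
    intro σ
    obtain ⟨j, hj⟩ := hpat (fun i => if h : ((π.symm i : Fin (d + m + 2)) : ℕ) < d then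
      τ ⟨((π.symm i : Fin (d + m + 2)) : ℕ), h⟩
      else σ ⟨((π.symm i : Fin (d + m + 2)) : ℕ) - d, by
        have := ((π.symm i : Fin (d + m + 2))).isLt; omega⟩)
    have hjT : j < T := by
      by_contra hge
      push_neg at hge
      obtain ⟨i, hi⟩ := hτ (j - T)
      apply hi
      have h1 : T + (j - T) = j := by omega
      rw [h1, hj (π (Fin.castLE hdD i))]
      have h2 : π.symm (π (Fin.castLE hdD i)) = Fin.castLE hdD i :=
        Equiv.symm_apply_apply _ _
      simp only [h2]
      have h3 : ((Fin.castLE hdD i : Fin (d + m + 2)) : ℕ) < d := by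
        simp only [Fin.coe_castLE]; exact i.isLt
      rw [dif_pos h3]
      rfl
    refine ⟨j, fun k => ?_⟩
    set i' : Fin (d + m + 2) := ⟨d + (k : ℕ), Nat.add_lt_add_left k.isLt d⟩ with hi'
    have h3 : T ≤ t (π i') := hTge i' (by simp [hi'])
    have h5 := hper (π i') j (lt_of_lt_of_le hjT h3)
    rw [hj (π i')] at h5
    simp only [Equiv.symm_apply_apply] at h5
    have h6 : ¬ ((i' : ℕ) < d) := by simp [hi']
    rw [dif_neg h6] at h5
    have h7 : (⟨(i' : ℕ) - d, by have := i'.isLt; omega⟩ : Fin (m + 2)) = k := by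
      apply Fin.ext
      simp [hi']
    rw [h7] at h5
    exact h5
  -- pigeonhole: this would give an injection from 2^(m+2) patterns into n residues
  choose jf hjf using key
  have hinj : Function.Injective
      (fun σ : Fin (m + 2) → Bool => (⟨jf σ % n, Nat.mod_lt _ hn⟩ : Fin n)) := by
    intro σ1 σ2 hEq
    have hmod : jf σ1 % n = jf σ2 % n := by
      simpa using congrArg Fin.val hEq
    funext k
    rw [hjf σ1 k, hjf σ2 k]
    congr 1
    apply Fin.ext
    simp only
    conv_lhs => rw [Nat.add_mod]
    conv_rhs => rw [Nat.add_mod]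
    rw [hmod]
  have hcard := Fintype.card_le_of_injective _ hinj
  simp only [Fintype.card_fun, Fintype.card_fin, Fintype.card_bool] at hcard
  have h2m : n ≤ 2 ^ m := Nat.le_pow_clog (by norm_num) n
  have hlt : 2 ^ m < 2 ^ (m + 2) := Nat.pow_lt_pow_right (by norm_num) (by omega)
  omega
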